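/- If v is a positive C² function on Ω with eigenvalue vector of A(v) in the Gårding cone Γ_k at every point, then for every 1 ≤ m ≤ k, S_m(v) ≤ v^m·σ_m(λ(∇²v)) pointwise; in particular σ_m(λ(∇²v)) ≥ 0 for all 0 ≤ m ≤ k. -/

import Mathlib

open scoped BigOperators Classical
open MeasureTheory

noncomputable section

abbrev E (n : ℕ) := EuclideanSpace ℝ (Fin n)

/-- k-th elementary symmetric polynomial of a vector in ℝⁿ. -/
def esymm (n k : ℕ) (lam : Fin n → ℝ) : ℝ :=
  ∑ s ∈ Finset.univ.powersetCard k, ∏ i ∈ s, lam i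

/-- Eigenvalue vector of a real symmetric matrix (junk value 0 otherwise). -/
def eigs {n : ℕ} (M : Matrix (Fin n) (Fin n) ℝ) : Fin n → ℝ :=
  if h : M.IsHermitian then h.eigenvalues else 0

/-- σ_k of the eigenvalues of a symmetric matrix. -/
def Sk (n k : ℕ) (M : Matrix (Fin n) (Fin n) ℝ) : ℝ := esymm n k (eigs M)

/-- The (closed) Gårding cone Γ_k. -/
def GammaK (n k : ℕ) : Set (Fin n → ℝ) :=
  {lam | ∀ i, 1 ≤ i → i ≤ k → 0 ≤ esymm n i lam}

/-- i-th partial derivative. -/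
def pd {n : ℕ} (u : E n → ℝ) (i : Fin n) (x : E n) : ℝ :=
  fderiv ℝ u x (EuclideanSpace.single i 1)

/-- Hessian matrix. -/
def hess {n : ℕ} (u : E n → ℝ) (x : E n) : Matrix (Fin n) (Fin n) ℝ :=
  Matrix.of fun i j => pd (fun y => pd u j y) i x

/-- |∇u|². -/
def gradsq {n : ℕ} (u : E n → ℝ) (x : E n) : ℝ := ∑ i, (pd u i x) ^ 2

/-- The conformal Schouten-type matrix A_{ij}(u) = u u_{ij} - (1/2)|∇u|² δ_{ij}. -/
def Amat {n : ℕ} (u : E n → ℝ) (x : E n) : Matrix (Fin n) (Fin n) ℝ :=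
  Matrix.of fun i j => u x * hess u x i j - (1 / 2) * gradsq u x * (if i = j then 1 else 0)

/-! ### Auxiliary lemmas -/

open Finset in
lemma esymm_zero' (n : ℕ) (f : Fin n → ℝ) : esymm n 0 f = 1 := by
  simp [esymm, Finset.powersetCard_zero]

open Finset in
lemma esymm_smul (n m : ℕ) (c : ℝ) (f : Fin n → ℝ) :
    esymm n m (fun i => c * f i) = c ^ m * esymm n m f := by
  unfold esymm
  rw [Finset.mul_sum]
  refine Finset.sum_congr rfl fun s hs => ?_
  rw [Finset.prod_mul_distrib, Finset.prod_const, (Finset.mem_powersetCard.mp hs).2]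

lemma esymm_eq_multiset (n m : ℕ) (f : Fin n → ℝ) :
    esymm n m f = ((Finset.univ.val.map f).esymm m) :=
  (Finset.esymm_map_val f _ m).symm

lemma esymm_eq_of_map_eq (n m : ℕ) {f g : Fin n → ℝ}
    (h : Finset.univ.val.map f = Finset.univ.val.map g) :
    esymm n m f = esymm n m g := by
  rw [esymm_eq_multiset, esymm_eq_multiset, h]

open Finset in
lemma count_supersets {n : ℕ} (m : ℕ) (T : Finset (Fin n)) (hTm : T.card ≤ m) :
    ((Finset.univ.powersetCard m).filter (fun S => T ⊆ S)).card
      = (n - T.card).choose (m - T.card) := by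
  have hc : ((univ : Finset (Fin n)) \ T).card = n - T.card := by
    rw [card_sdiff_of_subset (subset_univ T), card_univ, Fintype.card_fin]
  rw [← hc, ← card_powersetCard]
  apply card_bij' (fun S _ => S \ T) (fun R _ => R ∪ T)
  · intro S hS
    simp only [mem_filter, mem_powersetCard] at hS
    obtain ⟨⟨-, hSc⟩, hTS⟩ := hS
    simp only [mem_powersetCard]
    exact ⟨sdiff_subset_sdiff (subset_univ S) le_rfl, by rw [card_sdiff_of_subset hTS, hSc]⟩
  · intro R hR
    simp only [mem_powersetCard, subset_sdiff] at hR
    obtain ⟨⟨-, hdisj⟩, hRc⟩ := hR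
    simp only [mem_filter, mem_powersetCard]
    refine ⟨⟨subset_univ _, ?_⟩, subset_union_right⟩
    rw [card_union_of_disjoint hdisj, hRc, Nat.sub_add_cancel hTm]
  · intro S hS
    simp only [mem_filter, mem_powersetCard] at hS
    exact sdiff_union_of_subset hS.2
  · intro R hR
    simp only [mem_powersetCard, subset_sdiff] at hR
    exact union_sdiff_cancel_right hR.1.2

open Finset in
lemma esymm_add_const (n m : ℕ) (f : Fin n → ℝ) (b : ℝ) :
    esymm n m (fun i => f i + b) =
      ∑ j ∈ Finset.range (m + 1),
        ((n - j).choose (m - j) : ℝ) * b ^ (m - j) * esymm n j f := by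
  have hA : esymm n m (fun i => f i + b)
      = ∑ S ∈ univ.powersetCard m, ∑ T ∈ S.powerset,
          (∏ i ∈ T, f i) * b ^ (m - T.card) := by
    unfold esymm
    refine sum_congr rfl fun S hS => ?_
    obtain ⟨-, hcard⟩ := mem_powersetCard.mp hS
    rw [prod_add]
    refine sum_congr rfl fun T hT => ?_
    rw [prod_const]
    congr 2
    rw [card_sdiff_of_subset (mem_powerset.mp hT), hcard]
  rw [hA]
  have hB : ∀ S ∈ univ.powersetCard m,
      (∑ T ∈ S.powerset, (∏ i ∈ T, f i) * b ^ (m - T.card))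
      = ∑ j ∈ Finset.range (m + 1), ∑ T ∈ S.powersetCard j,
          (∏ i ∈ T, f i) * b ^ (m - T.card) := by
    intro S hS
    obtain ⟨-, hcard⟩ := mem_powersetCard.mp hS
    rw [sum_powerset, hcard]
  rw [sum_congr rfl hB, sum_comm]
  refine sum_congr rfl fun j hj => ?_
  have hjm : j ≤ m := Nat.lt_succ_iff.mp (mem_range.mp hj)
  rw [sum_comm' (t' := univ.powersetCard j)
      (s' := fun T => (univ.powersetCard m).filter (fun S => T ⊆ S)) ?_]
  · unfold esymm
    rw [mul_sum]
    refine sum_congr rfl fun T hT => ?_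
    obtain ⟨-, hTc⟩ := mem_powersetCard.mp hT
    rw [sum_const, nsmul_eq_mul, count_supersets m T (hTc ▸ hjm), hTc]
    ring
  · intro S T
    simp only [mem_powersetCard, mem_filter]
    constructor
    · rintro ⟨⟨-, hSc⟩, hTS, hTc⟩
      exact ⟨⟨⟨subset_univ _, hSc⟩, hTS⟩, subset_univ _, hTc⟩
    · rintro ⟨⟨⟨-, hSc⟩, hTS⟩, -, hTc⟩
      exact ⟨⟨subset_univ _, hSc⟩, hTS, hTc⟩

open Finset in
lemma esymm_le_add_const (n m : ℕ) (f : Fin n → ℝ) (b : ℝ) (hb : 0 ≤ b)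
    (hf : ∀ j, j ≤ m → 0 ≤ esymm n j f) :
    esymm n m f ≤ esymm n m (fun i => f i + b) := by
  rw [esymm_add_const]
  have hmem : m ∈ Finset.range (m + 1) := by simp
  have h1 : ((n - m).choose (m - m) : ℝ) * b ^ (m - m) * esymm n m f = esymm n m f := by
    simp
  calc esymm n m f = ((n - m).choose (m - m) : ℝ) * b ^ (m - m) * esymm n m f := h1.symm
    _ ≤ _ := by
        refine Finset.single_le_sum
          (f := fun j => ((n - j).choose (m - j) : ℝ) * b ^ (m - j) * esymm n j f)
          (fun j hj => ?_) hmem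
        have hjm : j ≤ m := Nat.lt_succ_iff.mp (mem_range.mp hj)
        exact mul_nonneg (mul_nonneg (Nat.cast_nonneg _) (pow_nonneg hb _)) (hf j hjm)

open Matrix Polynomial in
lemma det_smul_one_sub {n : ℕ} (M : Matrix (Fin n) (Fin n) ℝ) (hM : M.IsHermitian) (t : ℝ) :
    (t • (1 : Matrix (Fin n) (Fin n) ℝ) - M).det = ∏ i, (t - hM.eigenvalues i) := by
  set U : Matrix (Fin n) (Fin n) ℝ := (hM.eigenvectorUnitary : Matrix (Fin n) (Fin n) ℝ) with hU
  have hUU : U * star U = 1 := Matrix.mem_unitaryGroup_iff.mp hM.eigenvectorUnitary.2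
  have hD : M = U * Matrix.diagonal (RCLike.ofReal ∘ hM.eigenvalues) * star U :=
    hM.spectral_theorem
  have hsc : t • (1 : Matrix (Fin n) (Fin n) ℝ)
      = U * (t • (1 : Matrix (Fin n) (Fin n) ℝ)) * star U := by
    rw [Matrix.mul_smul, Matrix.smul_mul, mul_one, hUU]
  have key : t • (1 : Matrix (Fin n) (Fin n) ℝ) - M
      = U * (t • (1 : Matrix (Fin n) (Fin n) ℝ)
          - Matrix.diagonal (RCLike.ofReal ∘ hM.eigenvalues)) * star U := by
    rw [Matrix.mul_sub, Matrix.sub_mul, ← hsc, ← hD]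
  have hdet1 : U.det * (star U).det = 1 := by
    rw [← Matrix.det_mul, hUU, Matrix.det_one]
  rw [key, Matrix.det_mul, Matrix.det_mul]
  have hdiag : t • (1 : Matrix (Fin n) (Fin n) ℝ)
      - Matrix.diagonal (RCLike.ofReal ∘ hM.eigenvalues)
      = Matrix.diagonal (fun i => t - hM.eigenvalues i) := by
    ext i j
    by_cases h : i = j <;>
      simp [h, Matrix.sub_apply, Matrix.smul_apply, Matrix.one_apply, Matrix.diagonal_apply,
        RCLike.ofReal]
  rw [hdiag, Matrix.det_diagonal]
  calc (U.det * ∏ i : Fin n, (t - hM.eigenvalues i)) * (star U).det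
      = (U.det * (star U).det) * ∏ i : Fin n, (t - hM.eigenvalues i) := by ring
    _ = ∏ i : Fin n, (t - hM.eigenvalues i) := by rw [hdet1, one_mul]

open Polynomial in
lemma multiset_eq_of_prod_eq {n : ℕ} (f g : Fin n → ℝ)
    (h : ∀ t : ℝ, ∏ i, (t - f i) = ∏ i, (t - g i)) :
    Finset.univ.val.map f = Finset.univ.val.map g := by
  have hpoly : (∏ i : Fin n, (X - C (f i))) = ∏ i : Fin n, (X - C (g i)) := by
    apply Polynomial.funext
    intro t
    simpa [Polynomial.eval_prod] using h t
  have hf : (∏ i : Fin n, (X - C (f i)))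
      = ((Finset.univ.val.map f).map (fun a => X - C a)).prod := by
    rw [Multiset.map_map]; rfl
  have hg : (∏ i : Fin n, (X - C (g i)))
      = ((Finset.univ.val.map g).map (fun a => X - C a)).prod := by
    rw [Multiset.map_map]; rfl
  have := congrArg Polynomial.roots hpoly
  rwa [hf, hg, Polynomial.roots_multiset_prod_X_sub_C,
    Polynomial.roots_multiset_prod_X_sub_C] at this

lemma hess_eq_sndFDeriv {n : ℕ} (u : E n → ℝ) (x : E n)
    (hu : ContDiffAt ℝ 2 u x) (i j : Fin n) :
    hess u x i j
      = fderiv ℝ (fderiv ℝ u) x (EuclideanSpace.single i 1) (EuclideanSpace.single j 1) := by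
  have hdiff : DifferentiableAt ℝ (fderiv ℝ u) x :=
    (hu.fderiv_right (m := 1) le_rfl).differentiableAt one_ne_zero
  have : hess u x i j
      = fderiv ℝ (fun y => (fderiv ℝ u y) (EuclideanSpace.single j 1)) x
          (EuclideanSpace.single i 1) := rfl
  rw [this, fderiv_clm_apply hdiff (differentiableAt_const _)]
  simp

lemma hess_isHermitian {n : ℕ} (u : E n → ℝ) (x : E n)
    (hu : ContDiffAt ℝ 2 u x) : (hess u x).IsHermitian := by
  have hsym : IsSymmSndFDerivAt ℝ u x := hu.isSymmSndFDerivAt (by simp [minSmoothness_of_isRCLikeNormedField])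
  ext i j
  rw [Matrix.conjTranspose_apply, star_trivial, hess_eq_sndFDeriv u x hu,
    hess_eq_sndFDeriv u x hu]
  exact hsym _ _

theorem stmt7 (n k : ℕ) (hk : 1 ≤ k) (hkn : k ≤ n)
    (Ω : Set (E n)) (hΩ : IsOpen Ω) (v : E n → ℝ)
    (hv : ContDiffOn ℝ 2 v Ω) (hvpos : ∀ x ∈ Ω, 0 < v x)
    (hvG : ∀ x ∈ Ω, eigs (Amat v x) ∈ GammaK n k) :
    ∀ x ∈ Ω,
      (∀ m, 1 ≤ m → m ≤ k → Sk n m (Amat v x) ≤ v x ^ m * Sk n m (hess v x)) ∧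
      (∀ m, m ≤ k → 0 ≤ Sk n m (hess v x)) := by
  intro x hx
  have hvx : 0 < v x := hvpos x hx
  set b : ℝ := 1 / 2 * gradsq v x with hbdef
  have hb : 0 ≤ b := by
    have : 0 ≤ gradsq v x := Finset.sum_nonneg fun i _ => sq_nonneg _
    rw [hbdef]; linarith
  have hH : (hess v x).IsHermitian :=
    hess_isHermitian v x (hv.contDiffAt (hΩ.mem_nhds hx))
  have hAmat : Amat v x = v x • hess v x - b • (1 : Matrix (Fin n) (Fin n) ℝ) := by
    ext i j
    by_cases h : i = j <;>
      simp [Amat, Matrix.sub_apply, Matrix.smul_apply, Matrix.one_apply, smul_eq_mul, hbdef, h]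
  have hA : (Amat v x).IsHermitian := by
    ext i j
    rw [Matrix.conjTranspose_apply, star_trivial]
    have hs : hess v x j i = hess v x i j := by
      conv_lhs => rw [← hH]
      simp [Matrix.conjTranspose_apply]
    simp only [Amat, Matrix.of_apply]
    rw [hs]
    by_cases h : i = j <;> simp [h]
    · exact fun hji => absurd hji.symm h
  set μ : Fin n → ℝ := hA.eigenvalues with hμdef
  set lam : Fin n → ℝ := hH.eigenvalues with hlamdef
  have heigsA : eigs (Amat v x) = μ := by rw [eigs, dif_pos hA]
  have heigsH : eigs (hess v x) = lam := by rw [eigs, dif_pos hH]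
  have hμ : ∀ j, j ≤ k → 0 ≤ esymm n j μ := by
    intro j hj
    rcases Nat.eq_zero_or_pos j with h0 | h1
    · rw [h0, esymm_zero']; norm_num
    · have := hvG x hx j h1 hj
      rwa [heigsA] at this
  -- key product identity
  have key : ∀ t : ℝ, ∏ i, (t - lam i) = ∏ i, (t - (μ i + b) / v x) := by
    intro t
    have h1 : (t • (1 : Matrix (Fin n) (Fin n) ℝ) - hess v x).det = ∏ i, (t - lam i) :=
      det_smul_one_sub _ hH t
    have h2 : ((v x * t - b) • (1 : Matrix (Fin n) (Fin n) ℝ) - Amat v x).det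
        = ∏ i, (v x * t - b - μ i) := det_smul_one_sub _ hA _
    have hsmul : (v x) • (t • (1 : Matrix (Fin n) (Fin n) ℝ) - hess v x)
        = (v x * t - b) • (1 : Matrix (Fin n) (Fin n) ℝ) - Amat v x := by
      rw [hAmat]
      module
    have h3 : (v x) ^ n * (t • (1 : Matrix (Fin n) (Fin n) ℝ) - hess v x).det
        = ∏ i, (v x * t - b - μ i) := by
      rw [← h2, ← hsmul, Matrix.det_smul, Fintype.card_fin]
    have h4 : ∏ i, (t - lam i) = (v x)⁻¹ ^ n * ∏ i, (v x * t - b - μ i) := by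
      rw [← h3, h1]
      field_simp
      rw [one_div, inv_pow, mul_assoc, inv_mul_cancel₀ (pow_ne_zero _ hvx.ne'), mul_one]
    rw [h4]
    have h5 : ∀ i : Fin n, t - (μ i + b) / v x = (v x)⁻¹ * (v x * t - b - μ i) := by
      intro i; field_simp; ring
    calc (v x)⁻¹ ^ n * ∏ i, (v x * t - b - μ i)
        = ∏ i : Fin n, (v x)⁻¹ * (v x * t - b - μ i) := by
          rw [Finset.prod_mul_distrib, Finset.prod_const, Finset.card_univ, Fintype.card_fin]
      _ = ∏ i, (t - (μ i + b) / v x) := by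
          exact Finset.prod_congr rfl fun i _ => (h5 i).symm
  have hmult : Finset.univ.val.map lam
      = Finset.univ.val.map (fun i => (μ i + b) / v x) :=
    multiset_eq_of_prod_eq _ _ key
  -- main identity : v^m σ_m(lam) = esymm (μ + b)
  have hmain : ∀ m : ℕ, v x ^ m * esymm n m lam = esymm n m (fun i => μ i + b) := by
    intro m
    rw [← esymm_smul]
    have hmap : Finset.univ.val.map (fun i => v x * lam i)
        = Finset.univ.val.map (fun i => μ i + b) := by
      have h0 := congrArg (Multiset.map (fun a => v x * a)) hmult
      rw [Multiset.map_map, Multiset.map_map] at h0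
      have h6 : ((fun a => v x * a) ∘ fun i => (μ i + b) / v x) = fun i => μ i + b := by
        funext i; simp only [Function.comp_apply]; field_simp
      have h7 : ((fun a => v x * a) ∘ lam) = fun i => v x * lam i := rfl
      rw [h6, h7] at h0
      exact h0
    exact esymm_eq_of_map_eq n m hmap
  have hchain : ∀ m : ℕ, m ≤ k → esymm n m μ ≤ v x ^ m * esymm n m lam := by
    intro m hm
    rw [hmain m]
    exact esymm_le_add_const n m μ b hb fun j hj => hμ j (hj.trans hm)
  constructor
  · intro m hm1 hm2
    have := hchain m hm2
    rwa [Sk, Sk, heigsA, heigsH]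
  · intro m hm
    rw [Sk, heigsH]
    rcases Nat.eq_zero_or_pos m with h0 | h1
    · rw [h0, esymm_zero']; norm_num
    · have h2 : 0 ≤ v x ^ m * esymm n m lam := (hμ m hm).trans (hchain m hm)
      by_contra hcon
      push_neg at hcon
      have := mul_neg_of_pos_of_neg (pow_pos hvx m) hcon
      linarith
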